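/- Let G be a connected graph not isomorphic to a path, and let u be a pendant vertex adjacent to a cut-vertex v with deg(v) = 2. Then u is not a basis forced vertex of G. -/

import Mathlib

open SimpleGraph

def IsResolving {V : Type*} (G : SimpleGraph V) (R : Set V) : Prop :=
  ∀ x y : V, x ≠ y → ∃ r ∈ R, G.dist r x ≠ G.dist r y

noncomputable def metricDim {V : Type*} (G : SimpleGraph V) : ℕ :=
  sInf {n | ∃ R : Set V, IsResolving G R ∧ R.ncard = n}

def IsMetricBasis {V : Type*} (G : SimpleGraph V) (R : Set V) : Prop :=
  IsResolving G R ∧ R.ncard = metricDim G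

def IsBasisForced {V : Type*} (G : SimpleGraph V) (v : V) : Prop :=
  ∀ R : Set V, IsMetricBasis G R → v ∈ R

section Aux

variable {V : Type*} {G : SimpleGraph V} (hG : G.Connected)

include hG

/-- If `u`'s unique neighbor is `v`, then `dist u z = dist v z + 1` for `z ≠ u`. -/
lemma dist_pend {u v : V} (hpend : ∀ w : V, G.Adj u w ↔ w = v)
    {z : V} (hz : z ≠ u) : G.dist u z = G.dist v z + 1 := by
  have hadj : G.Adj u v := (hpend v).mpr rfl
  have h1 : G.dist u v = 1 := SimpleGraph.dist_eq_one_iff_adj.mpr hadj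
  have hle : G.dist u z ≤ G.dist v z + 1 := by
    have := hG.dist_triangle (u := u) (v := v) (w := z)
    omega
  obtain ⟨p, hp⟩ := hG.exists_walk_length_eq_dist u z
  cases p with
  | nil => exact absurd rfl hz
  | @cons _ w _ h q =>
    have hwv : w = v := (hpend w).mp h
    have h2 := SimpleGraph.dist_le (q.copy hwv rfl)
    rw [Walk.length_copy] at h2
    rw [Walk.length_cons] at hp
    omega

/-- Going down a level: if `dist u z = n + 1`, there is a neighbor of `z` at distance `n`. -/
lemma dist_step_down {u z : V} {n : ℕ} (h : G.dist u z = n + 1) :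
    ∃ y : V, G.Adj z y ∧ G.dist u y = n := by
  obtain ⟨p, hp⟩ := hG.exists_walk_length_eq_dist z u
  rw [SimpleGraph.dist_comm] at hp
  cases p with
  | nil => rw [h] at hp; simp at hp
  | @cons _ y _ hadj q =>
    refine ⟨y, hadj, ?_⟩
    have h1 : G.dist u y ≤ n := by
      have := SimpleGraph.dist_le q
      rw [SimpleGraph.dist_comm]
      rw [Walk.length_cons] at hp
      omega
    have h2 : G.dist u z ≤ G.dist u y + 1 := by
      have ht := hG.dist_triangle (u := u) (v := y) (w := z)
      have : G.dist y z = 1 := SimpleGraph.dist_eq_one_iff_adj.mpr hadj.symm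
      omega
    omega

end Aux

theorem stmt6 {V : Type*} [Fintype V] (G : SimpleGraph V) (hG : G.Connected)
    (hnpath : ∀ n : ℕ, ¬ Nonempty (G ≃g pathGraph n))
    (u v : V) (hpend : ∀ w : V, G.Adj u w ↔ w = v)
    (hcut : ¬ (G.induce {w | w ≠ v}).Connected)
    (hdeg : (G.neighborSet v).ncard = 2) :
    ¬ IsBasisForced G u := by
  classical
  have hadj : G.Adj u v := (hpend v).mpr rfl
  have huv : u ≠ v := hadj.ne
  have hduv : G.dist u v = 1 := SimpleGraph.dist_eq_one_iff_adj.mpr hadj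
  have hdvu : G.dist v u = 1 := by rwa [SimpleGraph.dist_comm] at hduv
  -- extract the other neighbor x of v
  obtain ⟨a, b, hab, hset⟩ := Set.ncard_eq_two.mp hdeg
  have humem : u ∈ G.neighborSet v := hadj.symm
  obtain ⟨x, hxu, hxset⟩ : ∃ x : V, x ≠ u ∧ G.neighborSet v = {u, x} := by
    rw [hset] at humem
    rcases humem with h | h
    · refine ⟨b, ?_, ?_⟩
      · intro hbu; rw [hbu] at hab; exact hab h.symm
      · rw [hset, h]
    · rw [Set.mem_singleton_iff] at h
      refine ⟨a, ?_, ?_⟩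
      · intro hau; rw [hau] at hab; exact hab h
      · rw [hset, Set.pair_comm, h]
  have hvx : G.Adj v x := by
    have : x ∈ G.neighborSet v := by rw [hxset]; right; rfl
    exact this
  have hxv : x ≠ v := hvx.ne'
  have hdvx : G.dist v x = 1 := SimpleGraph.dist_eq_one_iff_adj.mpr hvx
  have hnbr : ∀ w : V, G.Adj v w → w = u ∨ w = x := by
    intro w hw
    have : w ∈ G.neighborSet v := hw
    rw [hxset] at this
    exact this
  -- key distance lemma: for z ∉ {u, v}, dist v z = dist x z + 1
  have distv : ∀ z : V, z ≠ u → z ≠ v → G.dist v z = G.dist x z + 1 := by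
    intro z hzu hzv
    have hle : G.dist v z ≤ G.dist x z + 1 := by
      have := hG.dist_triangle (u := v) (v := x) (w := z)
      omega
    obtain ⟨p, hp⟩ := hG.exists_walk_length_eq_dist v z
    cases p with
    | nil => exact absurd rfl hzv
    | @cons _ w _ h q =>
      rw [Walk.length_cons] at hp
      rcases hnbr w h with hwu | hwx
      · have h1 := SimpleGraph.dist_le (q.copy hwu rfl)
        rw [Walk.length_copy] at h1
        have h2 := dist_pend hG hpend hzu
        omega
      · have h1 := SimpleGraph.dist_le (q.copy hwx rfl)
        rw [Walk.length_copy] at h1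
        omega
  -- dist r u = dist r x + 2 for r ∉ {u, v}
  have distru : ∀ r : V, r ≠ u → r ≠ v → G.dist r u = G.dist r x + 2 := by
    intro r hru hrv
    have h1 : G.dist u r = G.dist v r + 1 := dist_pend hG hpend hru
    have h2 : G.dist v r = G.dist x r + 1 := distv r hru hrv
    rw [SimpleGraph.dist_comm (u := r) (v := u), SimpleGraph.dist_comm (u := r) (v := x)]
    omega
  -- basic facts about metricDim
  have huniv : IsResolving G (Set.univ : Set V) := by
    intro p q hpq
    exact ⟨p, Set.mem_univ p, by
      rw [SimpleGraph.dist_self]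
      exact (hG.pos_dist_of_ne hpq).ne⟩
  have hSne : ({n | ∃ R : Set V, IsResolving G R ∧ R.ncard = n} : Set ℕ).Nonempty :=
    ⟨_, Set.univ, huniv, rfl⟩
  have metric_le : ∀ R : Set V, IsResolving G R → metricDim G ≤ R.ncard :=
    fun R hR => Nat.sInf_le ⟨R, hR, rfl⟩
  have hbasis : ∃ W : Set V, IsMetricBasis G W := by
    obtain ⟨R, hR, hcard⟩ := Nat.sInf_mem hSne
    exact ⟨R, hR, hcard⟩
  intro hforced
  obtain ⟨W, hWres, hWcard⟩ := hbasis
  have huW : u ∈ W := hforced W ⟨hWres, hWcard⟩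
  set W' : Set V := insert v (W \ {u}) with hW'def
  have huW' : u ∉ W' := by
    intro h
    rcases h with h | h
    · exact huv h
    · exact h.2 rfl
  by_cases hres : IsResolving G W'
  · -- swap works
    have h1 : metricDim G ≤ W'.ncard := metric_le _ hres
    have hWfin : W.Finite := Set.toFinite W
    have hd : (W \ {u}).ncard = W.ncard - 1 := Set.ncard_diff_singleton_of_mem huW
    have hpos : 0 < W.ncard := (Set.ncard_pos hWfin).mpr ⟨u, huW⟩
    have h2 : W'.ncard ≤ W.ncard := by
      have h3 := Set.ncard_insert_le v (W \ {u})
      rw [← hW'def] at h3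
      omega
    have hW'card : W'.ncard = metricDim G := by omega
    exact huW' (hforced W' ⟨hres, hW'card⟩)
  · -- swap fails: W ⊆ {u, v}
    unfold IsResolving at hres
    push_neg at hres
    obtain ⟨p, q, hpq, hall⟩ := hres
    have hvW' : v ∈ W' := Set.mem_insert v _
    have key : ∀ z ∈ W, z ≠ u → G.dist z p = G.dist z q := fun z hz hzu =>
      hall z (Set.mem_insert_of_mem _ ⟨hz, hzu⟩)
    have hone : p = u ∨ q = u := by
      by_contra h
      push_neg at h
      obtain ⟨hpu, hqu⟩ := h
      obtain ⟨r, hrW, hr⟩ := hWres p q hpq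
      rcases eq_or_ne r u with hru | hru
      · rw [hru] at hr
        have h1 : G.dist u p = G.dist v p + 1 := dist_pend hG hpend hpu
        have h2 : G.dist u q = G.dist v q + 1 := dist_pend hG hpend hqu
        have h3 := hall v hvW'
        omega
      · exact hr (key r hrW hru)
    -- symmetric helper
    have helper : ∀ b : V, b ≠ u → (∀ r ∈ W', G.dist r u = G.dist r b) →
        ∀ r ∈ W, r ≠ u → r = v := by
      intro b hbu hb
      have hvb : G.dist v b = 1 := by rw [← hdvu]; exact (hb v hvW').symm
      have hbv : b ≠ v := by
        intro h; rw [h, SimpleGraph.dist_self] at hvb; omega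
      have hbx : b = x := by
        have := distv b hbu hbv
        have hx0 : G.dist x b = 0 := by omega
        exact (hG.dist_eq_zero_iff.mp hx0).symm
      intro r hrW hru
      by_contra hrv
      have h1 := distru r hru hrv
      have h2 := hb r (Set.mem_insert_of_mem _ ⟨hrW, hru⟩)
      rw [hbx] at h2
      omega
    have hsub : ∀ r ∈ W, r ≠ u → r = v := by
      rcases hone with h | h
      · exact helper q (fun hq => hpq (by rw [h, hq]))
          (fun r hr => by rw [← h]; exact hall r hr)
      · exact helper p (fun hp => hpq (by rw [h, hp]))
          (fun r hr => by rw [← h]; exact (hall r hr).symm)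
    have hdxu : G.dist x u = 2 := by
      rw [SimpleGraph.dist_comm, dist_pend hG hpend hxu, hdvx]
    by_cases hvW : v ∈ W
    · -- W = {u, v}, use {v, x}
      have hWeq : W = {u, v} := by
        apply Set.eq_of_subset_of_subset
        · intro r hr
          rcases eq_or_ne r u with h | h
          · left; exact h
          · right; exact hsub r hr h
        · intro r hr
          rcases hr with h | h
          · rw [h]; exact huW
          · rw [h]; exact hvW
      have hresvx : IsResolving G ({v, x} : Set V) := by
        intro c d hcd
        by_cases hvcd : G.dist v c ≠ G.dist v d
        · exact ⟨v, Set.mem_insert v _, hvcd⟩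
        push_neg at hvcd
        obtain ⟨r, hrW, hr⟩ := hWres c d hcd
        rw [hWeq] at hrW
        have hru : r = u := by
          rcases hrW with h | h
          · exact h
          · rw [Set.mem_singleton_iff] at h
            rw [h] at hr
            exact absurd hvcd hr
        rw [hru] at hr
        have honecd : c = u ∨ d = u := by
          by_contra h
          push_neg at h
          have h1 : G.dist u c = G.dist v c + 1 := dist_pend hG hpend h.1
          have h2 : G.dist u d = G.dist v d + 1 := dist_pend hG hpend h.2
          omega
        have hxmem : x ∈ ({v, x} : Set V) := by right; rfl
        rcases honecd with h | h
        · -- c = u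
          have hdv : G.dist v d = 1 := by rw [← hvcd, h, hdvu]
          have hdu' : d ≠ u := fun hd => hcd (by rw [h, hd])
          have hdv' : d ≠ v := by
            intro hd; rw [hd, SimpleGraph.dist_self] at hdv; omega
          have hdx : d = x := by
            have := distv d hdu' hdv'
            have : G.dist x d = 0 := by omega
            exact (hG.dist_eq_zero_iff.mp this).symm
          exact ⟨x, hxmem, by rw [h, hdx, hdxu, SimpleGraph.dist_self]; omega⟩
        · -- d = u
          have hcv : G.dist v c = 1 := by rw [hvcd, h, hdvu]
          have hcu' : c ≠ u := fun hc => hcd (by rw [hc, h])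
          have hcv' : c ≠ v := by
            intro hc; rw [hc, SimpleGraph.dist_self] at hcv; omega
          have hcx : c = x := by
            have := distv c hcu' hcv'
            have : G.dist x c = 0 := by omega
            exact (hG.dist_eq_zero_iff.mp this).symm
          exact ⟨x, hxmem, by rw [h, hcx, hdxu, SimpleGraph.dist_self]; omega⟩
      have hcard2 : ({v, x} : Set V).ncard = 2 := Set.ncard_pair (Ne.symm hxv)
      have hWcard2 : W.ncard = 2 := by rw [hWeq]; exact Set.ncard_pair huv
      have hbasisvx : IsMetricBasis G {v, x} := ⟨hresvx, by rw [hcard2, ← hWcard, hWcard2]⟩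
      have hu2 := hforced _ hbasisvx
      rcases hu2 with h | h
      · exact huv h
      · rw [Set.mem_singleton_iff] at h
        exact hxu h.symm
    · -- W = {u}: use the far endpoint
      have hWeq : W = {u} := by
        apply Set.eq_of_subset_of_subset
        · intro r hr
          rcases eq_or_ne r u with h | h
          · exact h
          · exact absurd (hsub r hr h) (fun hv => hvW (hv ▸ hr))
        · intro r hr
          rw [Set.mem_singleton_iff] at hr
          rw [hr]; exact huW
      have hres1 : ∀ c d : V, c ≠ d → G.dist u c ≠ G.dist u d := by
        intro c d hcd
        obtain ⟨r, hrW, hr⟩ := hWres c d hcd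
        rw [hWeq, Set.mem_singleton_iff] at hrW
        rw [hrW] at hr
        exact hr
      have hinj : Function.Injective (G.dist u) := by
        intro c d h
        by_contra hcd
        exact hres1 c d hcd h
      obtain ⟨w, -, hwmax⟩ := Finset.exists_max_image Finset.univ (G.dist u) ⟨u, Finset.mem_univ u⟩
      set M := G.dist u w with hMdef
      have hmax : ∀ z : V, G.dist u z ≤ M := fun z => hwmax z (Finset.mem_univ z)
      -- all levels ≤ M are inhabited
      have hlevels : ∀ k : ℕ, k ≤ M → ∃ z : V, G.dist u z = k := by
        have hdown : ∀ j : ℕ, j ≤ M → ∃ z : V, G.dist u z = M - j := by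
          intro j
          induction j with
          | zero => intro _; exact ⟨w, by omega⟩
          | succ n ih =>
            intro hn
            obtain ⟨y, hy⟩ := ih (by omega)
            have : G.dist u y = (M - (n + 1)) + 1 := by omega
            obtain ⟨z, _, hz⟩ := dist_step_down hG this
            exact ⟨z, hz⟩
        intro k hk
        obtain ⟨z, hz⟩ := hdown (M - k) (by omega)
        exact ⟨z, by omega⟩
      -- dist z w ≤ M - dist u z
      have hchain : ∀ j : ℕ, ∀ z : V, G.dist u z + j = M → G.dist z w ≤ j := by
        intro j
        induction j with
        | zero =>
          intro z hz
          have hzw : z = w := hinj (by omega)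
          rw [hzw, SimpleGraph.dist_self]
        | succ n ih =>
          intro z hz
          obtain ⟨y, hy⟩ := hlevels (G.dist u z + 1) (by omega)
          obtain ⟨y', hadj', hy'⟩ := dist_step_down hG hy
          have hzy' : y' = z := hinj (by omega)
          rw [hzy'] at hadj'
          have h1 : G.dist z y = 1 := SimpleGraph.dist_eq_one_iff_adj.mpr hadj'.symm
          have h2 : G.dist y w ≤ n := ih y (by omega)
          have := hG.dist_triangle (u := z) (v := y) (w := w)
          omega
      have hdzw : ∀ z : V, G.dist z w = M - G.dist u z := by
        intro z
        have h1 : G.dist z w ≤ M - G.dist u z := hchain _ z (by have := hmax z; omega)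
        have h2 : M ≤ G.dist u z + G.dist z w := hG.dist_triangle (u := u) (v := z) (w := w)
        omega
      have hresw : IsResolving G ({w} : Set V) := by
        intro c d hcd
        refine ⟨w, rfl, ?_⟩
        rw [SimpleGraph.dist_comm (u := w) (v := c), SimpleGraph.dist_comm (u := w) (v := d),
          hdzw c, hdzw d]
        have h1 := hres1 c d hcd
        have h2 := hmax c
        have h3 := hmax d
        omega
      have hcardw : ({w} : Set V).ncard = 1 := Set.ncard_singleton w
      have hWcard1 : W.ncard = 1 := by rw [hWeq]; exact Set.ncard_singleton u
      have hbasisw : IsMetricBasis G {w} := ⟨hresw, by rw [hcardw, ← hWcard, hWcard1]⟩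
      have huw : u ∈ ({w} : Set V) := hforced _ hbasisw
      rw [Set.mem_singleton_iff] at huw
      have h1 : G.dist u w = 0 := by rw [← huw, SimpleGraph.dist_self]
      have h2 : 1 ≤ M := by rw [← hduv]; exact hmax v
      omega
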